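/- arXiv:1610.00298 — 2 statements merged into one kernel-verified Lean document; each statement's English description precedes it below -/
import Mathlib

section
/- Let I ⊆ k[x_1,…,x_n] be an ideal, π : k[x_1,…,x_n] → A := k[x_1,…,x_n]/I the quotient map, > a monomial order such that the images under π of the standard monomials (the monomials not lying in in_>(I)) form a k-basis of A, and M ∈ ℚ^{r×n} with in_>(in_M(I)) = in_>(I), where ℚ^r carries the lexicographic order ≻. Let f ∈ A be nonzero and write f = Σ_α c_α π(x^α), the sum over standard monomials x^α. Then the weight quasivaluation of f is attained and given by v_M(f) = min_≻{Mα : c_α ≠ 0}; that is, max_≻{ṽ_M(p) : p ∈ k[x_1,…,x_n], π(p) = f} exists and equals min_≻{Mα : c_α ≠ 0}. In particular the standard monomial basis is adapted to v_M. -/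
open MvPolynomial

instance finWellFoundedLT {r : ℕ} : WellFoundedLT (Fin r) := Finite.to_wellFoundedLT

/-- The initial form of a polynomial with respect to a comparison `le` on exponent vectors:
the sum of the terms of `f` whose exponent is `le`-minimal in the support of `f`. -/
noncomputable def initialForm {k : Type} [Field k] {n : ℕ}
    (le : (Fin n →₀ ℕ) → (Fin n →₀ ℕ) → Prop)
    (f : MvPolynomial (Fin n) k) : MvPolynomial (Fin n) k :=
  letI := Classical.decPred fun α : Fin n →₀ ℕ => ∀ β ∈ f.support, le α β
  ∑ α ∈ f.support.filter (fun α => ∀ β ∈ f.support, le α β),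
    monomial α (MvPolynomial.coeff α f)

/-- The initial ideal of `I`: the ideal generated by initial forms of nonzero elements of `I`. -/
noncomputable def initialIdeal {k : Type} [Field k] {n : ℕ}
    (le : (Fin n →₀ ℕ) → (Fin n →₀ ℕ) → Prop)
    (I : Ideal (MvPolynomial (Fin n) k)) : Ideal (MvPolynomial (Fin n) k) :=
  Ideal.span {g | ∃ f ∈ I, f ≠ 0 ∧ g = initialForm le f}

/-- The weight `Mα ∈ ℚ^r` of an exponent vector `α` under the weighting matrix `M`. -/
def mwt {n r : ℕ} (M : Matrix (Fin r) (Fin n) ℚ) (α : Fin n →₀ ℕ) : Fin r → ℚ :=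
  fun i => ∑ j, M i j * (α j : ℚ)

/-- Comparison of exponents by `M`-weight, in the lexicographic order on `ℚ^r`. -/
def mLe {n r : ℕ} (M : Matrix (Fin r) (Fin n) ℚ) : (Fin n →₀ ℕ) → (Fin n →₀ ℕ) → Prop :=
  fun α β => toLex (mwt M α) ≤ toLex (mwt M β)

/-- The weight `u·α ∈ ℚ` of an exponent vector under a single weight vector `u ∈ ℚ^n`. -/
def uwt {n : ℕ} (u : Fin n → ℚ) (α : Fin n →₀ ℕ) : ℚ := ∑ j, u j * (α j : ℚ)

/-- Comparison of exponents by `u`-weight. -/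
def uLe {n : ℕ} (u : Fin n → ℚ) : (Fin n →₀ ℕ) → (Fin n →₀ ℕ) → Prop :=
  fun α β => uwt u α ≤ uwt u β

/-- A monomial order on `k[x₁,…,xₙ]` in the MIN convention: a total order on exponent
vectors compatible with addition in which `0` (the monomial `1`) is the greatest element. -/
structure MinMonomialOrder (n : ℕ) where
  le : (Fin n →₀ ℕ) → (Fin n →₀ ℕ) → Prop
  total : ∀ a b, le a b ∨ le b a
  antisymm : ∀ a b, le a b → le b a → a = b
  trans : ∀ a b c, le a b → le b c → le a c
  add_le_add : ∀ a b c, le a b → le (a + c) (b + c)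
  le_zero : ∀ a, le a 0

section Lemmas

variable {k : Type} [Field k] {n : ℕ}

/-- A finite nonempty set with a total transitive relation has a minimum. -/
lemma finset_exists_min {A : Type*} (le : A → A → Prop)
    (total : ∀ a b, le a b ∨ le b a) (trans : ∀ a b c, le a b → le b c → le a c)
    (s : Finset A) (hs : s.Nonempty) : ∃ a ∈ s, ∀ b ∈ s, le a b := by
  classical
  induction s using Finset.induction_on with
  | empty => exact absurd hs (by simp)
  | @insert a s ha ih =>
    by_cases h : s.Nonempty
    · obtain ⟨m, hm, hmin⟩ := ih h
      rcases total a m with hle | hle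
      · refine ⟨a, Finset.mem_insert_self a s, ?_⟩
        intro b hb
        rcases Finset.mem_insert.1 hb with rfl | hb
        · rcases total b b with h' | h' <;> exact h'
        · exact trans _ _ _ hle (hmin b hb)
      · refine ⟨m, Finset.mem_insert_of_mem hm, ?_⟩
        intro b hb
        rcases Finset.mem_insert.1 hb with rfl | hb
        · exact hle
        · exact hmin b hb
    · rw [Finset.not_nonempty_iff_eq_empty] at h
      subst h
      refine ⟨a, Finset.mem_insert_self a _, ?_⟩
      intro b hb
      rcases Finset.mem_insert.1 hb with rfl | hb
      · rcases total b b with h' | h' <;> exact h'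
      · simp at hb

lemma coeff_initialForm (le : (Fin n →₀ ℕ) → (Fin n →₀ ℕ) → Prop)
    (f : MvPolynomial (Fin n) k) (α : Fin n →₀ ℕ) :
    MvPolynomial.coeff α (initialForm le f) =
      letI := Classical.decPred fun α : Fin n →₀ ℕ => ∀ β ∈ f.support, le α β
      if α ∈ f.support.filter (fun α => ∀ β ∈ f.support, le α β)
        then MvPolynomial.coeff α f else 0 := by
  classical
  rw [initialForm, MvPolynomial.coeff_sum]
  simp only [MvPolynomial.coeff_monomial]
  rw [Finset.sum_ite_eq']

lemma mem_support_initialForm_iff (le : (Fin n →₀ ℕ) → (Fin n →₀ ℕ) → Prop)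
    (f : MvPolynomial (Fin n) k) (α : Fin n →₀ ℕ) :
    α ∈ (initialForm le f).support ↔ α ∈ f.support ∧ ∀ β ∈ f.support, le α β := by
  classical
  rw [MvPolynomial.mem_support_iff, coeff_initialForm]
  by_cases h : α ∈ f.support ∧ ∀ β ∈ f.support, le α β
  · rw [if_pos (by simp only [Finset.mem_filter]; exact ⟨h.1, h.2⟩)]
    exact ⟨fun _ => h, fun _ => MvPolynomial.mem_support_iff.1 h.1⟩
  · rw [if_neg (fun hf => h (by simp only [Finset.mem_filter] at hf; exact hf))]
    simpa using h

lemma support_initialForm_subset (le : (Fin n →₀ ℕ) → (Fin n →₀ ℕ) → Prop)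
    (f : MvPolynomial (Fin n) k) : (initialForm le f).support ⊆ f.support := by
  intro α hα
  exact ((mem_support_initialForm_iff le f α).1 hα).1

lemma exists_mem_support_initialForm (le : (Fin n →₀ ℕ) → (Fin n →₀ ℕ) → Prop)
    (total : ∀ a b, le a b ∨ le b a) (trans : ∀ a b c, le a b → le b c → le a c)
    {f : MvPolynomial (Fin n) k} (hf : f ≠ 0) :
    ∃ α, α ∈ (initialForm le f).support := by
  obtain ⟨α, hα, hmin⟩ := finset_exists_min le total trans f.support
    (MvPolynomial.support_nonempty.2 hf)
  exact ⟨α, (mem_support_initialForm_iff le f α).2 ⟨hα, hmin⟩⟩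

lemma initialForm_ne_zero (le : (Fin n →₀ ℕ) → (Fin n →₀ ℕ) → Prop)
    (total : ∀ a b, le a b ∨ le b a) (trans : ∀ a b c, le a b → le b c → le a c)
    {f : MvPolynomial (Fin n) k} (hf : f ≠ 0) : initialForm le f ≠ 0 := by
  obtain ⟨α, hα⟩ := exists_mem_support_initialForm le total trans hf
  intro h
  rw [h] at hα
  simp at hα

lemma initialForm_mem (le : (Fin n →₀ ℕ) → (Fin n →₀ ℕ) → Prop)
    {I : Ideal (MvPolynomial (Fin n) k)} {f : MvPolynomial (Fin n) k}
    (hfI : f ∈ I) (hf : f ≠ 0) : initialForm le f ∈ initialIdeal le I :=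
  Ideal.subset_span ⟨f, hfI, hf, rfl⟩

lemma monomial_one_mem_of_term_mem {J : Ideal (MvPolynomial (Fin n) k)}
    {γ : Fin n →₀ ℕ} {c : k} (hc : c ≠ 0) (h : monomial γ c ∈ J) :
    monomial γ (1 : k) ∈ J := by
  have : monomial γ (1 : k) = MvPolynomial.C c⁻¹ * monomial γ c := by
    rw [MvPolynomial.C_mul_monomial, inv_mul_cancel₀ hc]
  rw [this]
  exact Ideal.mul_mem_left _ _ h

end Lemmas

section MoLemmas

variable {k : Type} [Field k] {n : ℕ}

/-- Adding an exponent vector decreases a MIN monomial order. -/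
lemma mo_add_le {n : ℕ} (mo : MinMonomialOrder n) (a b : Fin n →₀ ℕ) :
    mo.le (a + b) a := by
  have := mo.add_le_add b 0 a (mo.le_zero b)
  simpa [add_comm] using this

lemma mo_add_le' {n : ℕ} (mo : MinMonomialOrder n) (a b : Fin n →₀ ℕ) :
    mo.le (a + b) b := by
  have := mo.add_le_add a 0 b (mo.le_zero a)
  simpa using this

/-- The relation "strictly greater in a MIN monomial order" is well-founded (Dickson). -/
lemma mo_wf {n : ℕ} (mo : MinMonomialOrder n) :
    WellFounded (fun a b : Fin n →₀ ℕ => mo.le b a ∧ b ≠ a) := by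
  haveI : IsStrictOrder (Fin n →₀ ℕ) (fun a b : Fin n →₀ ℕ => mo.le b a ∧ b ≠ a) :=
    { irrefl := fun a h => h.2 rfl
      trans := fun a b c hab hbc => by
        refine ⟨mo.trans _ _ _ hbc.1 hab.1, fun hca => ?_⟩
        subst hca
        exact hab.2 (mo.antisymm _ _ hab.1 hbc.1) }
  rw [RelEmbedding.wellFounded_iff_isEmpty]
  constructor
  intro emb
  obtain ⟨i, j, hij, hle⟩ := (Set.isPWO_of_wellQuasiOrderedLE (Set.univ : Set (Fin n →₀ ℕ))).exists_lt (f := fun m => emb m)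
    (fun m => Set.mem_univ _)
  -- emb maps `>` on ℕ to the relation, so from i < j we get the relation between emb j and emb i
  have h := emb.map_rel_iff.2 (show j > i from hij)
  -- h : mo.le (emb i) (emb j) ∧ emb i ≠ emb j  (instantiated at pair (emb j, emb i))
  have hji : emb j = emb i + (emb j - emb i) := by
    ext x
    simp only [Finsupp.add_apply, Finsupp.tsub_apply]
    exact (Nat.add_sub_cancel' (hle x)).symm
  have : mo.le (emb j) (emb i) := by
    rw [hji, add_comm]
    exact mo_add_le' mo _ _
  exact h.2 (mo.antisymm _ _ h.1 this)

/-- For a total antisymmetric order, the initial form is a single term. -/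
lemma initialForm_mo_eq_monomial (mo : MinMonomialOrder n)
    {f : MvPolynomial (Fin n) k} (hf : f ≠ 0) :
    ∃ γ, γ ∈ f.support ∧ (∀ β ∈ f.support, mo.le γ β) ∧
      initialForm mo.le f = monomial γ (MvPolynomial.coeff γ f) := by
  classical
  obtain ⟨γ, hγ, hmin⟩ := finset_exists_min mo.le mo.total mo.trans f.support
    (MvPolynomial.support_nonempty.2 hf)
  refine ⟨γ, hγ, hmin, ?_⟩
  apply MvPolynomial.ext
  intro β
  rw [coeff_initialForm, MvPolynomial.coeff_monomial]
  by_cases hβ : β = γ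
  · subst hβ
    rw [if_pos (by simp only [Finset.mem_filter]; exact ⟨hγ, hmin⟩), if_pos rfl]
  · rw [if_neg, if_neg (fun h => hβ h.symm)]
    intro hmem
    simp only [Finset.mem_filter] at hmem
    exact hβ (mo.antisymm _ _ (hmem.2 γ hγ) (hmin β hmem.1))

end MoLemmas

section Groebner

variable {k : Type} [Field k] {n : ℕ} {I : Ideal (MvPolynomial (Fin n) k)}
  (mo : MinMonomialOrder n)

/-- If `x^β` lies in the initial ideal, there is `g ∈ I` whose `mo`-initial exponent is `β`. -/
lemma exists_inI_of_nonstandard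
    {β : Fin n →₀ ℕ} (hβ : monomial β (1 : k) ∈ initialIdeal mo.le I) :
    ∃ g ∈ I, MvPolynomial.coeff β g ≠ 0 ∧ ∀ γ ∈ g.support, mo.le β γ := by
  classical
  rw [initialIdeal, Ideal.span, ← Submodule.span_eq (Submodule.span _ _)] at hβ
  rw [Submodule.span_eq] at hβ
  obtain ⟨c, hcsupp, hcsum⟩ := Submodule.mem_span_set.1 hβ
  -- the coefficient of β in the sum is 1 ≠ 0, so some term contributes
  have h1 : MvPolynomial.coeff β (c.sum fun i r => r • i) = 1 := by
    rw [hcsum, MvPolynomial.coeff_monomial, if_pos rfl]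
  have hne : ∃ i ∈ c.support, MvPolynomial.coeff β (c i • i) ≠ 0 := by
    by_contra hcon
    push_neg at hcon
    rw [Finsupp.sum, MvPolynomial.coeff_sum] at h1
    rw [Finset.sum_eq_zero hcon] at h1
    exact one_ne_zero h1.symm
  obtain ⟨i, hi, hci⟩ := hne
  obtain ⟨f, hfI, hf0, hfi⟩ := hcsupp hi
  obtain ⟨γ, hγ, hγmin, hform⟩ := initialForm_mo_eq_monomial mo hf0
  rw [hfi, hform] at hci
  rw [smul_eq_mul, MvPolynomial.coeff_mul_monomial'] at hci
  have hγβ : γ ≤ β := by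
    by_contra hcon
    rw [if_neg hcon] at hci
    exact hci rfl
  refine ⟨monomial (β - γ) (1 : k) * f, Ideal.mul_mem_left _ _ hfI, ?_, ?_⟩
  · rw [MvPolynomial.coeff_monomial_mul', if_pos (tsub_le_self), one_mul,
      tsub_tsub_cancel_of_le hγβ]
    exact MvPolynomial.mem_support_iff.1 hγ
  · intro α hα
    rw [MvPolynomial.mem_support_iff, MvPolynomial.coeff_monomial_mul'] at hα
    by_cases hle : β - γ ≤ α
    · rw [if_pos hle, one_mul] at hα
      have hmem : α - (β - γ) ∈ f.support := MvPolynomial.mem_support_iff.2 hα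
      have h2 := mo.add_le_add γ (α - (β - γ)) (β - γ) (hγmin _ hmem)
      rwa [add_tsub_cancel_of_le hγβ, tsub_add_cancel_of_le hle] at h2
    · rw [if_neg hle] at hα
      exact absurd rfl hα

/-- Existence of normal forms: every polynomial is congruent mod `I` to one
supported on standard monomials. -/
lemma exists_normal_form (I : Ideal (MvPolynomial (Fin n) k)) (p : MvPolynomial (Fin n) k) :
    ∃ q : MvPolynomial (Fin n) k, p - q ∈ I ∧
      ∀ γ ∈ q.support, monomial γ (1 : k) ∉ initialIdeal mo.le I := by
  classical
  set bad : MvPolynomial (Fin n) k → Finset (Fin n →₀ ℕ) :=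
    fun p => p.support.filter (fun γ => monomial γ (1 : k) ∈ initialIdeal mo.le I) with hbad
  have key : ∀ β : Fin n →₀ ℕ, ∀ p : MvPolynomial (Fin n) k,
      (β ∈ bad p ∧ ∀ γ ∈ bad p, mo.le β γ) →
      ∃ q : MvPolynomial (Fin n) k, p - q ∈ I ∧
        ∀ γ ∈ q.support, monomial γ (1 : k) ∉ initialIdeal mo.le I := by
    intro β
    induction β using (mo_wf mo).induction with
    | _ β ih =>
      intro p ⟨hβmem, hβmin⟩
      simp only [hbad, Finset.mem_filter] at hβmem
      obtain ⟨g, hgI, hgβ, hgmin⟩ := exists_inI_of_nonstandard mo hβmem.2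
      set c : k := MvPolynomial.coeff β p / MvPolynomial.coeff β g with hc
      set p₁ : MvPolynomial (Fin n) k := p - c • g with hp₁
      have hpp₁ : p - p₁ ∈ I := by
        have h : p - p₁ = MvPolynomial.C c * g := by
          rw [hp₁, MvPolynomial.smul_eq_C_mul]; ring
        rw [h]
        exact Ideal.mul_mem_left _ _ hgI
      have hcoeffβ : MvPolynomial.coeff β p₁ = 0 := by
        rw [hp₁]
        simp only [MvPolynomial.coeff_sub, MvPolynomial.coeff_smul, smul_eq_mul]
        rw [hc, div_mul_cancel₀ _ hgβ, sub_self]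
      have hsupp₁ : ∀ γ ∈ p₁.support, γ ∈ p.support ∨ γ ∈ g.support := by
        intro γ hγ
        rw [MvPolynomial.mem_support_iff] at hγ
        by_contra hcon
        push_neg at hcon
        have h1 := MvPolynomial.notMem_support_iff.1 hcon.1
        have h2 := MvPolynomial.notMem_support_iff.1 hcon.2
        apply hγ
        rw [hp₁]
        simp [MvPolynomial.coeff_sub, MvPolynomial.coeff_smul, h1, h2]
      by_cases hb : (bad p₁).Nonempty
      · obtain ⟨β₂, hβ₂, hβ₂min⟩ := finset_exists_min mo.le mo.total mo.trans _ hb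
        have hrel : mo.le β β₂ ∧ β ≠ β₂ := by
          constructor
          · simp only [hbad, Finset.mem_filter] at hβ₂
            rcases hsupp₁ β₂ hβ₂.1 with h | h
            · exact hβmin β₂ (by simp only [hbad, Finset.mem_filter]; exact ⟨h, hβ₂.2⟩)
            · exact hgmin β₂ h
          · intro hcon
            subst hcon
            simp only [hbad, Finset.mem_filter, MvPolynomial.mem_support_iff] at hβ₂
            exact hβ₂.1 hcoeffβ
        obtain ⟨q, hq1, hq2⟩ := ih β₂ ⟨hrel.1, hrel.2⟩ p₁ ⟨hβ₂, hβ₂min⟩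
        refine ⟨q, ?_, hq2⟩
        have : p - q = (p - p₁) + (p₁ - q) := by ring
        rw [this]
        exact I.add_mem hpp₁ hq1
      · refine ⟨p₁, hpp₁, ?_⟩
        intro γ hγ hmem
        exact hb ⟨γ, by simp only [hbad, Finset.mem_filter]; exact ⟨hγ, hmem⟩⟩
  by_cases hb : (bad p).Nonempty
  · obtain ⟨β, hβ, hβmin⟩ := finset_exists_min mo.le mo.total mo.trans _ hb
    exact key β p ⟨hβ, hβmin⟩
  · refine ⟨p, by simpa using I.zero_mem, ?_⟩
    intro γ hγ hmem
    exact hb ⟨γ, by simp only [hbad, Finset.mem_filter]; exact ⟨hγ, hmem⟩⟩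

end Groebner

section Weighted

variable {k : Type} [Field k] {n r : ℕ} {I : Ideal (MvPolynomial (Fin n) k)}
  (mo : MinMonomialOrder n) (M : Matrix (Fin r) (Fin n) ℚ)

lemma mLe_total (M : Matrix (Fin r) (Fin n) ℚ) :
    ∀ a b, mLe M a b ∨ mLe M b a := fun a b => le_total (toLex (mwt M a)) (toLex (mwt M b))

lemma mLe_trans (M : Matrix (Fin r) (Fin n) ℚ) :
    ∀ a b c, mLe M a b → mLe M b c → mLe M a c := fun _ _ _ h1 h2 => le_trans h1 h2

/-- Given the Gröbner compatibility hypothesis, the minimal-weight part of any nonzero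
element of `I` contains a nonstandard exponent. -/
lemma exists_nonstandard_min_weight
    (hGR : initialIdeal mo.le (initialIdeal (mLe M) I) = initialIdeal mo.le I)
    {g : MvPolynomial (Fin n) k} (hgI : g ∈ I) (hg0 : g ≠ 0) :
    ∃ γ, γ ∈ g.support ∧ (∀ β ∈ g.support, mLe M γ β) ∧
      monomial γ (1 : k) ∈ initialIdeal mo.le I := by
  set h : MvPolynomial (Fin n) k := initialForm (mLe M) g with hh
  have hhmem : h ∈ initialIdeal (mLe M) I := initialForm_mem _ hgI hg0
  have hh0 : h ≠ 0 := initialForm_ne_zero _ (mLe_total M) (mLe_trans M) hg0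
  obtain ⟨γ, hγ, hγmin, hform⟩ := initialForm_mo_eq_monomial mo hh0
  have hmem2 : initialForm mo.le h ∈ initialIdeal mo.le I := by
    rw [← hGR]
    exact initialForm_mem _ hhmem hh0
  rw [hform] at hmem2
  have hγsupp := (mem_support_initialForm_iff (mLe M) g γ).1 hγ
  exact ⟨γ, hγsupp.1, hγsupp.2,
    monomial_one_mem_of_term_mem (MvPolynomial.mem_support_iff.1 hγ) hmem2⟩

/-- Key lemma: the normal form of a polynomial with all weights `⪰ a` also has
all weights `⪰ a`. -/
lemma exists_weighted_normal_form
    (hGR : initialIdeal mo.le (initialIdeal (mLe M) I) = initialIdeal mo.le I)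
    (a : Lex (Fin r → ℚ)) (p : MvPolynomial (Fin n) k)
    (hp : ∀ γ ∈ p.support, a ≤ toLex (mwt M γ)) :
    ∃ q : MvPolynomial (Fin n) k, p - q ∈ I ∧
      (∀ γ ∈ q.support, monomial γ (1 : k) ∉ initialIdeal mo.le I) ∧
      ∀ γ ∈ q.support, a ≤ toLex (mwt M γ) := by
  obtain ⟨q, hq1, hq2⟩ := exists_normal_form mo I p
  refine ⟨q, hq1, hq2, ?_⟩
  by_contra hcon
  push_neg at hcon
  obtain ⟨γ₀, hγ₀supp, hγ₀⟩ := hcon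
  -- the difference g = p - q is a nonzero element of I
  have hcoeffp : ∀ δ : Fin n →₀ ℕ, toLex (mwt M δ) < a → MvPolynomial.coeff δ p = 0 := by
    intro δ hδ
    by_contra hne
    exact absurd (hp δ (MvPolynomial.mem_support_iff.2 hne)) (not_le.2 hδ)
  have hγ₀g : γ₀ ∈ (p - q).support := by
    rw [MvPolynomial.mem_support_iff, MvPolynomial.coeff_sub,
      hcoeffp γ₀ hγ₀, zero_sub, neg_ne_zero]
    exact MvPolynomial.mem_support_iff.1 hγ₀supp
  have hg0 : p - q ≠ 0 := fun h => by rw [h] at hγ₀g; simp at hγ₀g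
  obtain ⟨γ, hγsupp, hγmin, hγbad⟩ := exists_nonstandard_min_weight mo M hGR hq1 hg0
  have hγwt : toLex (mwt M γ) < a := lt_of_le_of_lt (hγmin γ₀ hγ₀g) hγ₀
  have hγq : γ ∈ q.support := by
    rw [MvPolynomial.mem_support_iff] at hγsupp ⊢
    intro h
    rw [MvPolynomial.coeff_sub, hcoeffp γ hγwt, h, sub_zero] at hγsupp
    exact hγsupp rfl
  exact hq2 γ hγq hγbad

end Weighted

section QuotBasis

variable {k : Type} [Field k] {n : ℕ} {I : Ideal (MvPolynomial (Fin n) k)}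

lemma mk_monomial_smul (γ : Fin n →₀ ℕ) (c : k) :
    Ideal.Quotient.mk I (monomial γ c) = c • Ideal.Quotient.mk I (monomial γ (1 : k)) := by
  have h : monomial γ c = c • monomial γ (1 : k) := by
    rw [MvPolynomial.smul_monomial, smul_eq_mul, mul_one]
  rw [h, ← Ideal.Quotient.mkₐ_eq_mk (R₁ := k), map_smul]

lemma mk_smul (p : MvPolynomial (Fin n) k) (c : k) :
    Ideal.Quotient.mk I (c • p) = c • Ideal.Quotient.mk I p := by
  rw [← Ideal.Quotient.mkₐ_eq_mk (R₁ := k), map_smul]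

lemma mk_mem_span (q : MvPolynomial (Fin n) k) (P : (Fin n →₀ ℕ) → Prop)
    (hq : ∀ γ ∈ q.support, P γ) :
    Ideal.Quotient.mk I q ∈ Submodule.span k
      {x : MvPolynomial (Fin n) k ⧸ I |
        ∃ γ, P γ ∧ x = Ideal.Quotient.mk I (monomial γ (1 : k))} := by
  rw [← MvPolynomial.support_sum_monomial_coeff q, map_sum]
  apply Submodule.sum_mem
  intro γ hγ
  rw [mk_monomial_smul]
  exact Submodule.smul_mem _ _ (Submodule.subset_span ⟨γ, hq γ hγ, rfl⟩)

end QuotBasis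


/-- **Computation of a weight quasivaluation by a standard monomial basis**
(Proposition `prop-st-monomial-adapted-basis`).  Suppose the images of the standard monomials
(those not in `in_>(I)`) form a basis of `A = k[x]/I` and `in_>(in_M(I)) = in_>(I)`.  If
`f ≠ 0` has expansion `f = Σ c_α π(x^α)` over standard monomials, then the maximum over all
lifts `p` of `f` of `ṽ_M(p)` is attained and equals `min {Mα : c_α ≠ 0}`.  In particular
the standard monomial basis is adapted to `v_M`. -/
theorem stmt_14 {k : Type} [Field k] {n r : ℕ}
    (I : Ideal (MvPolynomial (Fin n) k)) (mo : MinMonomialOrder n)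
    (bas : Module.Basis {α : Fin n →₀ ℕ // MvPolynomial.monomial α (1 : k) ∉ initialIdeal mo.le I}
      k (MvPolynomial (Fin n) k ⧸ I))
    (hbas : ∀ s, bas s = Ideal.Quotient.mk I (MvPolynomial.monomial s.1 (1 : k)))
    (M : Matrix (Fin r) (Fin n) ℚ)
    (hGR : initialIdeal mo.le (initialIdeal (mLe M) I) = initialIdeal mo.le I)
    (f : MvPolynomial (Fin n) k ⧸ I) (hf : f ≠ 0) :
    (∃ α₀, (bas.repr f) α₀ ≠ 0 ∧
      (∀ β, (bas.repr f) β ≠ 0 → toLex (mwt M α₀.1) ≤ toLex (mwt M β.1)) ∧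
      -- the maximum defining `v_M f` is attained at a lift realizing `min {Mα : c_α ≠ 0}` …
      (∃ p : MvPolynomial (Fin n) k, Ideal.Quotient.mk I p = f ∧
        (∀ α ∈ p.support, toLex (mwt M α₀.1) ≤ toLex (mwt M α)) ∧
        (∃ α ∈ p.support, toLex (mwt M α) = toLex (mwt M α₀.1))) ∧
      -- … and every lift has `ṽ_M`-value at most `min {Mα : c_α ≠ 0}`:
      (∀ p : MvPolynomial (Fin n) k, Ideal.Quotient.mk I p = f →
        ∃ α ∈ p.support, toLex (mwt M α) ≤ toLex (mwt M α₀.1))) ∧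
    -- the standard monomial basis is adapted to `v_M`:
    (∀ (a : Lex (Fin r → ℚ)) (g : MvPolynomial (Fin n) k ⧸ I),
      g ∈ Submodule.span k {x : MvPolynomial (Fin n) k ⧸ I |
          ∃ α : Fin n →₀ ℕ, MvPolynomial.monomial α (1 : k) ∉ initialIdeal mo.le I ∧
            a ≤ toLex (mwt M α) ∧ x = Ideal.Quotient.mk I (MvPolynomial.monomial α (1 : k))} ↔
        ∃ p : MvPolynomial (Fin n) k, Ideal.Quotient.mk I p = g ∧
          ∀ α ∈ p.support, a ≤ toLex (mwt M α)) := by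
    classical
  -- ADAPTEDNESS (second part), proved first so it can be reused.
  have adapted : ∀ (a : Lex (Fin r → ℚ)) (g : MvPolynomial (Fin n) k ⧸ I),
      g ∈ Submodule.span k {x : MvPolynomial (Fin n) k ⧸ I |
          ∃ α : Fin n →₀ ℕ, MvPolynomial.monomial α (1 : k) ∉ initialIdeal mo.le I ∧
            a ≤ toLex (mwt M α) ∧ x = Ideal.Quotient.mk I (MvPolynomial.monomial α (1 : k))} ↔
        ∃ p : MvPolynomial (Fin n) k, Ideal.Quotient.mk I p = g ∧
          ∀ α ∈ p.support, a ≤ toLex (mwt M α) := by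
    intro a g
    constructor
    · intro hg
      induction hg using Submodule.span_induction with
      | mem x hx =>
        obtain ⟨α, _, hα2, rfl⟩ := hx
        refine ⟨monomial α (1 : k), rfl, ?_⟩
        intro β hβ
        rw [MvPolynomial.support_monomial, if_neg (one_ne_zero (α := k))] at hβ
        rw [Finset.mem_singleton] at hβ
        subst hβ
        exact hα2
      | zero => exact ⟨0, map_zero _, by simp⟩
      | add x y hx hy ihx ihy =>
        obtain ⟨p₁, hp₁, hp₁'⟩ := ihx
        obtain ⟨p₂, hp₂, hp₂'⟩ := ihy
        refine ⟨p₁ + p₂, by rw [(Ideal.Quotient.mk I).map_add, hp₁, hp₂], ?_⟩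
        intro β hβ
        rcases Finset.mem_union.1 (MvPolynomial.support_add hβ) with h | h
        · exact hp₁' β h
        · exact hp₂' β h
      | smul c x hx ihx =>
        obtain ⟨p₁, hp₁, hp₁'⟩ := ihx
        refine ⟨c • p₁, by rw [mk_smul, hp₁], ?_⟩
        intro β hβ
        exact hp₁' β (MvPolynomial.support_smul hβ)
    · rintro ⟨p, hpg, hpw⟩
      obtain ⟨q, hq1, hq2, hq3⟩ := exists_weighted_normal_form mo M hGR a p hpw
      have hmkq : Ideal.Quotient.mk I q = g := by
        have : Ideal.Quotient.mk I (p - q) = 0 := (Ideal.Quotient.eq_zero_iff_mem).2 hq1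
        rw [map_sub, sub_eq_zero] at this
        rw [← this, hpg]
      have hmem := mk_mem_span (I := I) q
        (fun γ => monomial γ (1 : k) ∉ initialIdeal mo.le I ∧ a ≤ toLex (mwt M γ))
        (fun γ hγ => ⟨hq2 γ hγ, hq3 γ hγ⟩)
      rw [hmkq] at hmem
      refine Submodule.span_mono ?_ hmem
      rintro x ⟨γ, ⟨h1, h2⟩, h3⟩
      exact ⟨γ, h1, h2, h3⟩
  refine ⟨?_, adapted⟩
  -- FIRST PART
  have h0 : bas.repr f ≠ 0 := fun h => hf (by
    have := congrArg (bas.repr.symm) h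
    simpa using this)
  obtain ⟨α₀, hα₀mem, hα₀min⟩ := finset_exists_min
    (fun s t : {α : Fin n →₀ ℕ // MvPolynomial.monomial α (1 : k) ∉ initialIdeal mo.le I} =>
      toLex (mwt M s.1) ≤ toLex (mwt M t.1))
    (fun s t => le_total _ _) (fun _ _ _ h1 h2 => le_trans h1 h2)
    (bas.repr f).support (Finsupp.support_nonempty_iff.2 h0)
  set p : MvPolynomial (Fin n) k := (bas.repr f).sum (fun s c => monomial s.1 c) with hp
  have hcoeffp : ∀ β, MvPolynomial.coeff β p =
      ∑ s ∈ (bas.repr f).support, if s.1 = β then bas.repr f s else 0 := by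
    intro β
    rw [hp, Finsupp.sum, MvPolynomial.coeff_sum]
    apply Finset.sum_congr rfl
    intro s _
    rw [MvPolynomial.coeff_monomial]
  have hsuppp : ∀ β ∈ p.support, ∃ s ∈ (bas.repr f).support, β = s.1 := by
    intro β hβ
    rw [MvPolynomial.mem_support_iff, hcoeffp] at hβ
    by_contra hcon
    push_neg at hcon
    apply hβ
    apply Finset.sum_eq_zero
    intro s hs
    rw [if_neg (fun h => hcon s hs h.symm)]
  have hcoeffα₀ : MvPolynomial.coeff α₀.1 p = bas.repr f α₀ := by
    rw [hcoeffp, Finset.sum_eq_single α₀]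
    · rw [if_pos rfl]
    · intro s _ hne
      rw [if_neg (fun h => hne (Subtype.ext h))]
    · intro h
      exact absurd hα₀mem h
  have hmk : Ideal.Quotient.mk I p = f := by
    rw [hp, map_finsuppSum]
    conv_rhs => rw [← Module.Basis.linearCombination_repr bas f]
    rw [Finsupp.linearCombination_apply]
    apply Finsupp.sum_congr
    intro s _
    rw [mk_monomial_smul, hbas]
  refine ⟨α₀, Finsupp.mem_support_iff.1 hα₀mem, ?_, ?_, ?_⟩
  · intro β hβ
    exact hα₀min β (Finsupp.mem_support_iff.2 hβ)
  · refine ⟨p, hmk, ?_, ?_⟩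
    · intro α hα
      obtain ⟨s, hs, rfl⟩ := hsuppp α hα
      exact hα₀min s hs
    · refine ⟨α₀.1, ?_, rfl⟩
      rw [MvPolynomial.mem_support_iff, hcoeffα₀]
      exact Finsupp.mem_support_iff.1 hα₀mem
  · -- every lift has some exponent of weight ≤ the minimum
    intro q hq
    by_contra hcon
    push_neg at hcon
    have hq0 : q ≠ 0 := by
      intro h
      rw [h, map_zero] at hq
      exact hf hq.symm
    obtain ⟨αm, hαm, hαmmin⟩ := finset_exists_min
      (fun α β : Fin n →₀ ℕ => toLex (mwt M α) ≤ toLex (mwt M β))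
      (fun s t => le_total _ _) (fun _ _ _ h1 h2 => le_trans h1 h2)
      q.support (MvPolynomial.support_nonempty.2 hq0)
    set a : Lex (Fin r → ℚ) := toLex (mwt M αm) with ha
    have hlift : ∃ p' : MvPolynomial (Fin n) k, Ideal.Quotient.mk I p' = f ∧
        ∀ α ∈ p'.support, a ≤ toLex (mwt M α) := ⟨q, hq, fun α h => hαmmin α h⟩
    have hfspan := (adapted a f).2 hlift
    -- hence the repr of f is supported on weights ≥ a
    have hsub : {x : MvPolynomial (Fin n) k ⧸ I |
          ∃ α : Fin n →₀ ℕ, MvPolynomial.monomial α (1 : k) ∉ initialIdeal mo.le I ∧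
            a ≤ toLex (mwt M α) ∧ x = Ideal.Quotient.mk I (MvPolynomial.monomial α (1 : k))} ⊆
        bas '' {s : {α : Fin n →₀ ℕ //
            MvPolynomial.monomial α (1 : k) ∉ initialIdeal mo.le I} | a ≤ toLex (mwt M s.1)} := by
      rintro x ⟨γ, h1, h2, rfl⟩
      exact ⟨⟨γ, h1⟩, h2, hbas _⟩
    have hmem := Submodule.span_mono hsub hfspan
    have hsupp := Module.Basis.repr_support_subset_of_mem_span bas _ hmem
    have : a ≤ toLex (mwt M α₀.1) := hsupp (Finset.mem_coe.2 hα₀mem)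
    exact absurd this (not_le.2 (hcon αm hαm))
end

section
/- Let I ⊆ k[x_1,…,x_n] be an ideal, π : k[x_1,…,x_n] → A := k[x_1,…,x_n]/I the quotient map, and M ∈ ℚ^{r×n} with columns w_1,…,w_n ∈ ℚ^r, where ℚ^r carries the lexicographic order ≻. Fix i with x_i ∉ I and set b_i = π(x_i) ≠ 0. Then: (1) there is a lift p of b_i (namely p = x_i) with ṽ_M(p) = w_i, so every value ṽ_M(p) over lifts p of b_i is ⪰-comparable and the supremum defining v_M(b_i) is ⪰ w_i; and (2) there exists a lift p ∈ k[x_1,…,x_n] of b_i with ṽ_M(p) ≻ w_i if and only if x_i ∈ in_M(I). -/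
open MvPolynomial

/-- The value `ṽ_M(p)`: the minimal `M`-weight of the support of `p` (in the lexicographic
order on `ℚ^r`), with value `⊤` for `p = 0`. -/
noncomputable def tval {k : Type} [Field k] {n r : ℕ} (M : Matrix (Fin r) (Fin n) ℚ)
    (p : MvPolynomial (Fin n) k) : WithTop (Lex (Fin r → ℚ)) :=
  (p.support.image fun α => toLex (mwt M α)).min

/-! ### Auxiliary lemmas -/

section Aux

variable {k : Type} [Field k] {n r : ℕ} (M : Matrix (Fin r) (Fin n) ℚ)

lemma mwt_add (α β : Fin n →₀ ℕ) : mwt M (α + β) = mwt M α + mwt M β := by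
  funext l
  simp [mwt, Finsupp.add_apply, Nat.cast_add, mul_add, Finset.sum_add_distrib]

lemma mwt_single (i : Fin n) : mwt M (Finsupp.single i 1) = fun l => M l i := by
  funext l
  simp [mwt, Finsupp.single_apply]

/-- The weight-`w` homogeneous component of a polynomial. -/
noncomputable def comp {k : Type} [Field k] {n r : ℕ} (M : Matrix (Fin r) (Fin n) ℚ)
    (w : Lex (Fin r → ℚ)) (f : MvPolynomial (Fin n) k) : MvPolynomial (Fin n) k :=
  letI := Classical.decPred fun α : Fin n →₀ ℕ => toLex (mwt M α) = w
  ∑ α ∈ f.support.filter (fun α => toLex (mwt M α) = w), monomial α (MvPolynomial.coeff α f)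

lemma coeff_comp (w : Lex (Fin r → ℚ)) (f : MvPolynomial (Fin n) k) (β : Fin n →₀ ℕ) :
    coeff β (comp M w f) = if toLex (mwt M β) = w then coeff β f else 0 := by
  classical
  rw [comp, coeff_sum]
  simp only [coeff_monomial]
  rw [Finset.sum_ite_eq' _ β (fun α => coeff α f)]
  by_cases h : toLex (mwt M β) = w <;> by_cases hs : β ∈ f.support <;>
    simp_all [MvPolynomial.mem_support_iff]

lemma comp_zero (w : Lex (Fin r → ℚ)) : comp M w (0 : MvPolynomial (Fin n) k) = 0 := by
  ext γ
  simp [coeff_comp]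

lemma comp_add (w : Lex (Fin r → ℚ)) (p q : MvPolynomial (Fin n) k) :
    comp M w (p + q) = comp M w p + comp M w q := by
  ext γ
  simp only [coeff_comp, coeff_add]
  split_ifs <;> simp

lemma comp_monomial_mul (w : Lex (Fin r → ℚ)) (β : Fin n →₀ ℕ) (c : k)
    (p : MvPolynomial (Fin n) k) :
    comp M w (monomial β c * p) =
      monomial β c * comp M (w - toLex (mwt M β)) p := by
  ext γ
  rw [coeff_comp, coeff_monomial_mul', coeff_monomial_mul', coeff_comp]
  by_cases hle : β ≤ γ
  · have hγ : γ - β + β = γ := tsub_add_cancel_of_le hle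
    have hwt : mwt M γ = mwt M (γ - β) + mwt M β := by
      conv_lhs => rw [← hγ, mwt_add]
    have e2 : toLex (mwt M γ) = toLex (mwt M (γ - β)) + toLex (mwt M β) :=
      congrArg toLex hwt
    have key : (toLex (mwt M γ) = w) ↔
        (toLex (mwt M (γ - β)) = w - toLex (mwt M β)) := by
      rw [e2]
      exact eq_sub_iff_add_eq.symm
    simp only [hle, if_true]
    split_ifs with h1 h2 h2
    · rfl
    · exact absurd (key.mp h1) h2
    · exact absurd (key.mpr h2) h1
    · simp
  · simp [hle]

lemma comp_comp (w w' : Lex (Fin r → ℚ)) (f : MvPolynomial (Fin n) k) :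
    comp M w (comp M w' f) = if w = w' then comp M w' f else 0 := by
  split_ifs with h
  · subst h; ext γ; simp only [coeff_comp]; split_ifs <;> simp
  · ext γ; simp only [coeff_comp, coeff_zero]
    split_ifs with h1 h2 <;> try rfl
    exact absurd (h1 ▸ h2) h

lemma le_tval_iff (w : Lex (Fin r → ℚ)) (p : MvPolynomial (Fin n) k) :
    (↑w ≤ tval M p) ↔ ∀ α ∈ p.support, w ≤ toLex (mwt M α) := by
  rw [tval, Finset.le_min_iff]
  constructor
  · intro h α hα
    exact WithTop.coe_le_coe.mp (h _ (Finset.mem_image_of_mem _ hα))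
  · intro h b hb
    obtain ⟨α, hα, rfl⟩ := Finset.mem_image.mp hb
    exact WithTop.coe_le_coe.mpr (h α hα)

lemma lt_tval (w : Lex (Fin r → ℚ)) (p : MvPolynomial (Fin n) k)
    (h : ∀ α ∈ p.support, w < toLex (mwt M α)) : ↑w < tval M p := by
  rcases (p.support.image fun α => toLex (mwt M α)).eq_empty_or_nonempty with he | hne
  · rw [tval, he, Finset.min_empty]
    exact WithTop.coe_lt_top w
  · rw [tval, ← Finset.coe_min' hne]
    rw [WithTop.coe_lt_coe]
    obtain ⟨α, hα, hmin⟩ := Finset.mem_image.mp (Finset.min'_mem _ hne)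
    exact hmin ▸ h α hα

lemma tval_X (i : Fin n) :
    tval M (MvPolynomial.X i : MvPolynomial (Fin n) k) =
      ((toLex fun l => M l i : Lex (Fin r → ℚ)) : WithTop (Lex (Fin r → ℚ))) := by
  rw [tval, MvPolynomial.support_X, Finset.image_singleton, Finset.min_singleton, mwt_single]

lemma initialForm_eq (f : MvPolynomial (Fin n) k) (w₀ : Lex (Fin r → ℚ))
    (hge : ∀ α ∈ f.support, w₀ ≤ toLex (mwt M α)) (hne : comp M w₀ f ≠ 0) :
    initialForm (mLe M) f = comp M w₀ f := by
  classical
  obtain ⟨γ, hγ⟩ := MvPolynomial.ne_zero_iff.mp hne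
  rw [coeff_comp] at hγ
  have hγw : toLex (mwt M γ) = w₀ := by by_contra h; simp [h] at hγ
  have hγs : γ ∈ f.support := by
    rw [MvPolynomial.mem_support_iff]; intro h; simp [h] at hγ
  rw [initialForm, comp]
  apply Finset.sum_congr _ (fun _ _ => rfl)
  refine Finset.ext fun α => ?_
  rw [@Finset.mem_filter _ _ (Classical.decPred _), @Finset.mem_filter _ _ (Classical.decPred _)]
  simp only [mLe]
  constructor
  · rintro ⟨hαs, hall⟩
    refine ⟨hαs, le_antisymm (hγw ▸ hall γ hγs) (hge α hαs)⟩
  · rintro ⟨hαs, hαw⟩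
    exact ⟨hαs, fun β hβ => hαw ▸ hge β hβ⟩

/-- The key span-membership predicate: every weight component of `g` agrees with the
corresponding component of an element of `I` supported in weights `≥ w`. -/
def Good (I : Ideal (MvPolynomial (Fin n) k)) (M : Matrix (Fin r) (Fin n) ℚ)
    (g : MvPolynomial (Fin n) k) : Prop :=
  ∀ w : Lex (Fin r → ℚ), ∃ f ∈ I, comp M w g = comp M w f ∧
    ∀ α ∈ f.support, w ≤ toLex (mwt M α)

lemma Good.zero (I : Ideal (MvPolynomial (Fin n) k)) : Good I M 0 := by
  intro w
  exact ⟨0, I.zero_mem, rfl, by simp⟩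

lemma Good.add {I : Ideal (MvPolynomial (Fin n) k)} {g₁ g₂ : MvPolynomial (Fin n) k}
    (h₁ : Good I M g₁) (h₂ : Good I M g₂) : Good I M (g₁ + g₂) := by
  intro w
  obtain ⟨f₁, hf₁I, hc₁, hg₁⟩ := h₁ w
  obtain ⟨f₂, hf₂I, hc₂, hg₂⟩ := h₂ w
  refine ⟨f₁ + f₂, I.add_mem hf₁I hf₂I, by rw [comp_add, comp_add, hc₁, hc₂], ?_⟩
  intro α hα
  rcases Finset.mem_union.mp (MvPolynomial.support_add hα) with h | h
  · exact hg₁ α h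
  · exact hg₂ α h

lemma Good.monomial_mul {I : Ideal (MvPolynomial (Fin n) k)} {g : MvPolynomial (Fin n) k}
    (hg : Good I M g) (β : Fin n →₀ ℕ) (c : k) : Good I M (monomial β c * g) := by
  intro w
  obtain ⟨f, hfI, hc, hge⟩ := hg (w - toLex (mwt M β))
  refine ⟨monomial β c * f, I.mul_mem_left _ hfI, ?_, ?_⟩
  · rw [comp_monomial_mul, comp_monomial_mul, hc]
  · intro α hα
    rw [MvPolynomial.mem_support_iff, coeff_monomial_mul'] at hα
    by_cases hle : β ≤ α
    · simp only [hle, if_true] at hα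
      have hαβ : coeff (α - β) f ≠ 0 := right_ne_zero_of_mul hα
      have h1 : w - toLex (mwt M β) ≤ toLex (mwt M (α - β)) :=
        hge _ (MvPolynomial.mem_support_iff.mpr hαβ)
      have h2 : w - toLex (mwt M β) + toLex (mwt M β) ≤
          toLex (mwt M (α - β)) + toLex (mwt M β) := add_le_add h1 le_rfl
      have h3 : w - toLex (mwt M β) + toLex (mwt M β) = w := sub_add_cancel w _
      have h4 : toLex (mwt M (α - β)) + toLex (mwt M β) = toLex (mwt M α) := by
        have : mwt M (α - β) + mwt M β = mwt M α := by
          rw [← mwt_add, tsub_add_cancel_of_le hle]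
        exact congrArg toLex this
      rw [h3, h4] at h2
      exact h2
    · simp [hle] at hα

lemma Good.of_mem_span {I : Ideal (MvPolynomial (Fin n) k)} {g : MvPolynomial (Fin n) k}
    (h : g ∈ initialIdeal (mLe M) I) : Good I M g := by
  refine Submodule.span_induction ?_ (Good.zero M I) (fun x y _ _ hx hy => Good.add M hx hy)
    ?_ h
  · rintro g ⟨f, hfI, hf0, rfl⟩
    intro w
    have hsupp : f.support.Nonempty := MvPolynomial.support_nonempty.mpr hf0
    have himg : (f.support.image fun α => toLex (mwt M α)).Nonempty := hsupp.image _
    set w₀ := (f.support.image fun α => toLex (mwt M α)).min' himg with hw₀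
    have hge : ∀ α ∈ f.support, w₀ ≤ toLex (mwt M α) := fun α hα =>
      Finset.min'_le _ _ (Finset.mem_image_of_mem _ hα)
    obtain ⟨γ, hγs, hγw⟩ := Finset.mem_image.mp (Finset.min'_mem _ himg)
    have hne : comp M w₀ f ≠ 0 := by
      intro h0
      have : coeff γ (comp M w₀ f) = 0 := by rw [h0]; simp
      rw [coeff_comp, hγw, if_pos rfl] at this
      exact MvPolynomial.mem_support_iff.mp hγs this
    have hin : initialForm (mLe M) f = comp M w₀ f := initialForm_eq M f w₀ hge hne
    by_cases hw : w = w₀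
    · subst hw
      exact ⟨f, hfI, by rw [hin, comp_comp, if_pos rfl], hge⟩
    · refine ⟨0, I.zero_mem, ?_, by simp⟩
      rw [hin, comp_comp, if_neg hw, comp_zero]
  · intro q g _ hg
    rw [smul_eq_mul]
    rw [q.as_sum, Finset.sum_mul]
    apply Finset.sum_induction _ (Good I M) (fun _ _ ha hb => Good.add M ha hb) (Good.zero M I)
    intro β _
    exact Good.monomial_mul M hg β _

end Aux

/-- **Values of generators under a weight quasivaluation** (Lemma `lem-contractcalc`). -/
theorem stmt_15 {k : Type} [Field k] {n r : ℕ}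
    (I : Ideal (MvPolynomial (Fin n) k)) (M : Matrix (Fin r) (Fin n) ℚ)
    (i : Fin n) (hxi : (MvPolynomial.X i : MvPolynomial (Fin n) k) ∉ I) :
    tval M (MvPolynomial.X i : MvPolynomial (Fin n) k) =
        ((toLex fun l => M l i : Lex (Fin r → ℚ)) : WithTop (Lex (Fin r → ℚ))) ∧
    ((∃ p : MvPolynomial (Fin n) k,
        Ideal.Quotient.mk I p = Ideal.Quotient.mk I (MvPolynomial.X i) ∧
        ((toLex fun l => M l i : Lex (Fin r → ℚ)) : WithTop (Lex (Fin r → ℚ))) < tval M p) ↔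
      (MvPolynomial.X i : MvPolynomial (Fin n) k) ∈ initialIdeal (mLe M) I) := by
  classical
  set w : Lex (Fin r → ℚ) := toLex fun l => M l i with hw
  have hws : toLex (mwt M (Finsupp.single i 1)) = w := by rw [mwt_single]
  refine ⟨tval_X M i, ?_, ?_⟩
  · -- forward direction
    rintro ⟨p, hmk, hlt⟩
    set f : MvPolynomial (Fin n) k := MvPolynomial.X i - p with hf
    have hfI : f ∈ I := by
      rw [hf]
      rw [Ideal.Quotient.eq] at hmk
      simpa using I.neg_mem hmk
    have hpw : ∀ α ∈ p.support, w < toLex (mwt M α) := by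
      intro α hα
      have h1 : tval M p ≤ ↑(toLex (mwt M α)) :=
        Finset.min_le (Finset.mem_image_of_mem _ hα)
      exact WithTop.coe_lt_coe.mp (lt_of_lt_of_le hlt h1)
    have hsing : Finsupp.single i 1 ∉ p.support := by
      intro hmem
      exact absurd (hws ▸ hpw _ hmem) (lt_irrefl w)
    have hcoefff : ∀ γ, toLex (mwt M γ) = w → coeff γ f = coeff γ (MvPolynomial.X i) := by
      intro γ hγ
      have : coeff γ p = 0 := by
        by_contra hc
        have := hpw γ (MvPolynomial.mem_support_iff.mpr hc)
        rw [hγ] at this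
        exact lt_irrefl w this
      rw [hf, coeff_sub, this, sub_zero]
    have hcomp : comp M w f = MvPolynomial.X i := by
      ext γ
      rw [coeff_comp]
      split_ifs with h
      · exact hcoefff γ h
      · symm
        rw [MvPolynomial.coeff_X']
        rw [if_neg]
        intro heq
        exact h (heq ▸ hws)
    have hne : comp M w f ≠ 0 := by
      rw [hcomp]
      exact MvPolynomial.X_ne_zero i
    have hge : ∀ α ∈ f.support, w ≤ toLex (mwt M α) := by
      intro α hα
      rw [MvPolynomial.mem_support_iff, hf, coeff_sub] at hα
      by_cases hp : coeff α p = 0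
      · have : coeff α (MvPolynomial.X i : MvPolynomial (Fin n) k) ≠ 0 := by
          intro h0; rw [h0, hp] at hα; simp at hα
        rw [MvPolynomial.coeff_X'] at this
        have : Finsupp.single i 1 = α := by by_contra h0; simp [h0] at this
        rw [← this, hws]
      · exact le_of_lt (hpw α (MvPolynomial.mem_support_iff.mpr hp))
    have hf0 : f ≠ 0 := by
      intro h0
      rw [h0, comp_zero] at hne
      exact hne rfl
    apply Ideal.subset_span
    exact ⟨f, hfI, hf0, by rw [initialForm_eq M f w hge hne, hcomp]⟩
  · -- backward direction
    intro h
    obtain ⟨f, hfI, hcomp, hge⟩ := Good.of_mem_span M h w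
    have hcompX : comp M w (MvPolynomial.X i : MvPolynomial (Fin n) k) = MvPolynomial.X i := by
      ext γ
      rw [coeff_comp]
      split_ifs with hγ
      · rfl
      · symm
        rw [MvPolynomial.coeff_X', if_neg]
        intro heq
        exact hγ (heq ▸ hws)
    rw [hcompX] at hcomp
    -- hcomp : X i = comp M w f
    refine ⟨MvPolynomial.X i - f, ?_, ?_⟩
    · rw [Ideal.Quotient.eq]
      simpa using I.neg_mem hfI
    · apply lt_tval
      intro α hα
      rw [MvPolynomial.mem_support_iff, coeff_sub] at hα
      have hcf : ∀ γ, toLex (mwt M γ) = w → coeff γ f = coeff γ (MvPolynomial.X i) := by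
        intro γ hγ
        have h1 : coeff γ (comp M w f) = coeff γ (MvPolynomial.X i) := by rw [← hcomp]
        rw [coeff_comp, if_pos hγ] at h1
        exact h1
      have hfne : coeff α f ≠ 0 := by
        intro h0
        by_cases hX : coeff α (MvPolynomial.X i : MvPolynomial (Fin n) k) = 0
        · rw [hX, h0] at hα; simp at hα
        · rw [MvPolynomial.coeff_X'] at hX
          have heq : Finsupp.single i 1 = α := by by_contra hc; simp [hc] at hX
          have := hcf α (heq ▸ hws)
          rw [h0] at this
          rw [MvPolynomial.coeff_X', if_pos heq] at this
          exact one_ne_zero this.symm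
      have hle : w ≤ toLex (mwt M α) := hge α (MvPolynomial.mem_support_iff.mpr hfne)
      rcases lt_or_eq_of_le hle with h' | h'
      · exact h'
      · exfalso
        have := hcf α h'.symm
        rw [this] at hα
        simp at hα
end
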